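/- Quantitative Riemann–Lebesgue lemma, case 1 < p ≤ 2 (Remark 3 (i)): Let 1 < p ≤ 2 with conjugate exponent p', and let f ∈ L^p_A(ℝ₊) on the Jacobi hypergroup. Then there exists a positive constant c such that for every δ > 0, (∫_{1/δ}^∞ |𝓕(f)(x)|^{p'} dx/|c(x)|²)^{1/p'} ≤ c ω_{A,p}(f)(δ). -/

import Mathlib

open MeasureTheory Set Filter

/-- The `L^p` norm on `(0,∞)` with respect to the weighted measure `w(x) dx`. -/
noncomputable def wLpNorm (w : ℝ → ℝ) (p : ℝ) (f : ℝ → ℂ) : ℝ :=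
  (∫ x in Set.Ioi (0 : ℝ), ‖f x‖ ^ p * w x) ^ (1 / p)

/-- Membership in `L^p((0,∞), w(x) dx)`. -/
def MemW (w : ℝ → ℝ) (p : ℝ) (f : ℝ → ℂ) : Prop :=
  AEMeasurable f (volume.restrict (Set.Ioi (0 : ℝ))) ∧
    IntegrableOn (fun x => ‖f x‖ ^ p * w x) (Set.Ioi (0 : ℝ))

/-- The Jacobi hypergroup setting: the Chébli–Trimèche hypergroup `(ℝ₊, ∗(A))` with
`A(x) = 2^(2ρ) (sinh x)^(2α+1) (cosh x)^(2β+1)`, `α ≥ β ≥ -1/2`, `α ≠ -1/2`,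
`ρ = α + β + 1`.  Its characters are the Jacobi functions `φ_λ`, satisfying
`|1 - φ_λ(t)| ≥ c₀ min{1, (λt)²}`.  The density `cden = |c(λ)|⁻²` is even, continuous
and comparable to `|λ|^(2α+1)` for `|λ| > k` and to `|λ|²` for `|λ| ≤ k`.  The
generalized Fourier transform `FT` is given on `L¹_A` by
`𝓕(f)(λ) = ∫₀^∞ f(x) φ_λ(x) A(x) dx`; it satisfies `‖𝓕 f‖_∞ ≤ ‖f‖_{A,1}`, the
Hausdorff–Young inequality, the Hardy–Littlewood inequality of Lemma 1 and the
translation identity `𝓕(τ_δ f)(λ) = φ_λ(δ) 𝓕(f)(λ)`, where the generalized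
translations `τ_δ` are `L^p_A`-contractions. -/
structure JacobiHypergroup where
  α : ℝ
  β : ℝ
  ρ : ℝ
  hβα : β ≤ α
  hβ : -(1/2) ≤ β
  hα : α ≠ -(1/2)
  hρ : ρ = α + β + 1
  /-- the weight function `A` of the Jacobi hypergroup -/
  A : ℝ → ℝ
  hA : ∀ x : ℝ, 0 ≤ x →
    A x = (2 : ℝ) ^ (2 * ρ) * Real.sinh x ^ (2 * α + 1) * Real.cosh x ^ (2 * β + 1)
  /-- the Jacobi functions `φ_λ`, the characters of the hypergroup -/
  φ : ℝ → ℝ → ℂ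
  c₀ : ℝ
  hc₀ : 0 < c₀
  hφ_lower : ∀ lam t : ℝ, 0 < t →
    c₀ * min 1 ((lam * t) ^ 2) ≤ ‖1 - φ lam t‖
  /-- the density `|c(λ)|⁻²` of the Plancherel measure -/
  cden : ℝ → ℝ
  hcden_cont : Continuous cden
  hcden_even : ∀ x : ℝ, cden (-x) = cden x
  k : ℝ
  k₁ : ℝ
  k₂ : ℝ
  hk : 0 < k
  hk₁ : 0 < k₁
  hk₂ : 0 < k₂
  hcden_hi : ∀ x : ℝ, k < |x| →
    k₁ * |x| ^ (2 * α + 1) ≤ cden x ∧ cden x ≤ k₂ * |x| ^ (2 * α + 1)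
  hcden_lo : ∀ x : ℝ, |x| ≤ k →
    k₁ * |x| ^ (2 : ℝ) ≤ cden x ∧ cden x ≤ k₂ * |x| ^ (2 : ℝ)
  /-- the generalized Fourier transform -/
  FT : (ℝ → ℂ) → ℝ → ℂ
  hFT_def : ∀ f : ℝ → ℂ, MemW A 1 f → ∀ lam : ℝ,
    FT f lam = ∫ x in Set.Ioi (0 : ℝ), f x * φ lam x * (A x : ℂ)
  hFT_meas : ∀ f : ℝ → ℂ, Measurable (FT f)
  hFT_sub : ∀ f g : ℝ → ℂ, ∀ lam : ℝ,
    FT (fun y => f y - g y) lam = FT f lam - FT g lam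
  /-- `‖𝓕 f‖_∞ ≤ ‖f‖_{A,1}` -/
  hFT_sup : ∀ f : ℝ → ℂ, MemW A 1 f → ∀ lam : ℝ,
    ‖FT f lam‖ ≤ wLpNorm A 1 f
  /-- the Hausdorff–Young inequality `‖𝓕 f‖_{c,p'} ≤ C ‖f‖_{A,p}` -/
  hHY : ∀ p p' : ℝ, 1 < p → p ≤ 2 → 1 / p + 1 / p' = 1 →
    ∃ C > (0 : ℝ), ∀ f : ℝ → ℂ, MemW A p f →
      (∫⁻ lam in Set.Ioi (0 : ℝ),
          ENNReal.ofReal (‖FT f lam‖ ^ p' * cden lam)) ^ (1 / p')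
        ≤ ENNReal.ofReal (C * wLpNorm A p f)
  /-- the Hardy–Littlewood inequality of Lemma 1 (with the piecewise weight
  `g(t) = t³` for `t ≤ k`, `g(t) = t^(2(α+1))` for `t > k`) -/
  hHL : ∀ p : ℝ, 1 < p → p ≤ 2 →
    ∃ C > (0 : ℝ), ∀ f : ℝ → ℂ, MemW A p f →
      ∫⁻ x in Set.Ioi (0 : ℝ),
          ENNReal.ofReal ((if x ≤ k then x ^ (3 : ℝ) else x ^ (2 * (α + 1))) ^ (p - 2) *
            ‖FT f x‖ ^ p * cden x)
        ≤ ENNReal.ofReal (C * wLpNorm A p f ^ p)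
  /-- the generalized translation operators -/
  τ : ℝ → (ℝ → ℂ) → ℝ → ℂ
  hτ_contract : ∀ p : ℝ, 1 ≤ p → ∀ (δ : ℝ) (f : ℝ → ℂ), MemW A p f →
    MemW A p (τ δ f) ∧ wLpNorm A p (τ δ f) ≤ wLpNorm A p f
  hτ_diff : ∀ p : ℝ, 1 ≤ p → ∀ (δ : ℝ) (f : ℝ → ℂ), MemW A p f →
    MemW A p (fun y => τ δ f y - f y)
  /-- the translation identity `𝓕(τ_δ f)(λ) = φ_λ(δ) 𝓕(f)(λ)` -/
  hτ_FT : ∀ p : ℝ, 1 ≤ p → p ≤ 2 → ∀ (δ : ℝ) (f : ℝ → ℂ), MemW A p f →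
    ∀ᵐ lam ∂(volume.restrict (Set.Ioi (0 : ℝ))),
      FT (τ δ f) lam = φ lam δ * FT f lam

/-- The modulus of continuity of first order, `ω_{A,p}(f)(δ) = ‖τ_δ f - f‖_{A,p}`. -/
noncomputable def JacobiHypergroup.omega (S : JacobiHypergroup) (p : ℝ)
    (f : ℝ → ℂ) (δ : ℝ) : ℝ :=
  wLpNorm S.A p (fun y => S.τ δ f y - f y)

/-- **Quantitative Riemann–Lebesgue lemma, case 1 < p ≤ 2** (Remark 3 (i)): for
`1 < p ≤ 2` with conjugate exponent `p'` and `f ∈ L^p_A(ℝ₊)` on the Jacobi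
hypergroup, there exists `c > 0` such that for every `δ > 0`,
`(∫_{1/δ}^∞ |𝓕(f)(x)|^(p') dx/|c(x)|²)^(1/p') ≤ c ω_{A,p}(f)(δ)`. -/
theorem riemann_lebesgue_one_lt_p (S : JacobiHypergroup) (p p' : ℝ) (hp : 1 < p)
    (hp2 : p ≤ 2) (hpp' : 1 / p + 1 / p' = 1) (f : ℝ → ℂ) (hf : MemW S.A p f) :
    ∃ c > (0 : ℝ), ∀ δ > (0 : ℝ),
      (∫⁻ x in Set.Ioi (1 / δ),
          ENNReal.ofReal (‖S.FT f x‖ ^ p' * S.cden x)) ^ (1 / p')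
        ≤ ENNReal.ofReal (c * S.omega p f δ) := by
  obtain ⟨C, hC, hHYC⟩ := S.hHY p p' hp hp2 hpp'
  have hppos : (0:ℝ) < p := by linarith
  have hip' : (0:ℝ) < 1 / p' := by
    have h1 : 1 / p < 1 := by rw [div_lt_one hppos]; exact hp
    linarith
  have hp'pos : 0 < p' := one_div_pos.mp hip'
  have hp'ne : p' ≠ 0 := ne_of_gt hp'pos
  refine ⟨C / S.c₀, div_pos hC S.hc₀, fun δ hδ => ?_⟩
  set g : ℝ → ℂ := fun y => S.τ δ f y - f y with hgdef
  have hg : MemW S.A p g := S.hτ_diff p hp.le δ f hf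
  have hsub : Set.Ioi (1/δ) ⊆ Set.Ioi (0:ℝ) :=
    Set.Ioi_subset_Ioi (le_of_lt (by positivity))
  have hcden_nn : ∀ x : ℝ, 0 ≤ S.cden x := by
    intro x
    rcases le_or_gt (|x|) S.k with h | h
    · have h1 := (S.hcden_lo x h).1
      have h0 : (0:ℝ) ≤ S.k₁ * |x| ^ (2:ℝ) :=
        mul_nonneg S.hk₁.le (Real.rpow_nonneg (abs_nonneg x) _)
      linarith
    · have h1 := (S.hcden_hi x h).1
      have h0 : (0:ℝ) ≤ S.k₁ * |x| ^ (2*S.α+1) :=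
        mul_nonneg S.hk₁.le (Real.rpow_nonneg (abs_nonneg x) _)
      linarith
  have hτFT := S.hτ_FT p hp.le hp2 δ f hf
  have hτFT' : ∀ᵐ lam ∂(volume.restrict (Set.Ioi (1/δ))),
      S.FT (S.τ δ f) lam = S.φ lam δ * S.FT f lam :=
    ae_restrict_of_ae_restrict_of_subset hsub hτFT
  have hmem : ∀ᵐ lam ∂(volume.restrict (Set.Ioi (1/δ))), lam ∈ Set.Ioi (1/δ) :=
    ae_restrict_mem measurableSet_Ioi
  have hptwise : ∀ᵐ lam ∂(volume.restrict (Set.Ioi (1/δ))),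
      ENNReal.ofReal (‖S.FT f lam‖ ^ p' * S.cden lam) ≤
        ENNReal.ofReal ((1/S.c₀)^p') *
          ENNReal.ofReal (‖S.FT g lam‖ ^ p' * S.cden lam) := by
    filter_upwards [hτFT', hmem] with lam hid hlam
    have h1 : 1 < lam * δ := by
      have hl : 1/δ < lam := hlam
      calc (1:ℝ) = (1/δ) * δ := by field_simp
      _ < lam * δ := by nlinarith
    have hmin : min 1 ((lam * δ)^2) = 1 := min_eq_left (by nlinarith)
    have hlow := S.hφ_lower lam δ hδ
    rw [hmin, mul_one] at hlow
    have hFTg : S.FT g lam = (S.φ lam δ - 1) * S.FT f lam := by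
      rw [hgdef, S.hFT_sub (S.τ δ f) f lam, hid]; ring
    have habs : S.c₀ * ‖S.FT f lam‖ ≤ ‖S.FT g lam‖ := by
      rw [hFTg, norm_mul]
      have hneg : ‖1 - S.φ lam δ‖ = ‖S.φ lam δ - 1‖ := by
        rw [← norm_neg]; ring_nf
      calc S.c₀ * ‖S.FT f lam‖
          ≤ ‖1 - S.φ lam δ‖ * ‖S.FT f lam‖ :=
            mul_le_mul_of_nonneg_right hlow (norm_nonneg _)
        _ = _ := by rw [hneg]
    have habs' : ‖S.FT f lam‖ ≤ (1/S.c₀) * ‖S.FT g lam‖ := by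
      rw [div_mul_eq_mul_div, le_div_iff₀ S.hc₀, one_mul, mul_comm]
      exact habs
    have hpow : ‖S.FT f lam‖ ^ p' ≤
        (1/S.c₀)^p' * ‖S.FT g lam‖ ^ p' := by
      calc ‖S.FT f lam‖ ^ p'
          ≤ ((1/S.c₀) * ‖S.FT g lam‖) ^ p' :=
            Real.rpow_le_rpow (norm_nonneg _) habs' hp'pos.le
        _ = _ := Real.mul_rpow (one_div_nonneg.mpr S.hc₀.le) (norm_nonneg _)
    have hreal : ‖S.FT f lam‖ ^ p' * S.cden lam ≤
        (1/S.c₀)^p' * (‖S.FT g lam‖ ^ p' * S.cden lam) := by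
      rw [← mul_assoc]
      exact mul_le_mul_of_nonneg_right hpow (hcden_nn lam)
    calc ENNReal.ofReal (‖S.FT f lam‖ ^ p' * S.cden lam)
        ≤ ENNReal.ofReal ((1/S.c₀)^p' *
            (‖S.FT g lam‖ ^ p' * S.cden lam)) :=
          ENNReal.ofReal_le_ofReal hreal
      _ = _ := ENNReal.ofReal_mul (Real.rpow_nonneg (one_div_nonneg.mpr S.hc₀.le) _)
  have hωeq : wLpNorm S.A p g = S.omega p f δ := rfl
  calc (∫⁻ x in Set.Ioi (1/δ),
          ENNReal.ofReal (‖S.FT f x‖ ^ p' * S.cden x)) ^ (1/p')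
      ≤ (∫⁻ x in Set.Ioi (1/δ), ENNReal.ofReal ((1/S.c₀)^p') *
          ENNReal.ofReal (‖S.FT g x‖ ^ p' * S.cden x)) ^ (1/p') :=
        ENNReal.rpow_le_rpow (lintegral_mono_ae hptwise) hip'.le
    _ = (ENNReal.ofReal ((1/S.c₀)^p') * ∫⁻ x in Set.Ioi (1/δ),
          ENNReal.ofReal (‖S.FT g x‖ ^ p' * S.cden x)) ^ (1/p') := by
        rw [lintegral_const_mul' _ _ ENNReal.ofReal_ne_top]
    _ ≤ (ENNReal.ofReal ((1/S.c₀)^p') * ∫⁻ x in Set.Ioi (0:ℝ),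
          ENNReal.ofReal (‖S.FT g x‖ ^ p' * S.cden x)) ^ (1/p') :=
        ENNReal.rpow_le_rpow
          (mul_le_mul_right (lintegral_mono_set hsub) _) hip'.le
    _ = ENNReal.ofReal ((1/S.c₀)^p') ^ (1/p') * (∫⁻ x in Set.Ioi (0:ℝ),
          ENNReal.ofReal (‖S.FT g x‖ ^ p' * S.cden x)) ^ (1/p') :=
        ENNReal.mul_rpow_of_nonneg _ _ hip'.le
    _ ≤ ENNReal.ofReal ((1/S.c₀)^p') ^ (1/p') *
          ENNReal.ofReal (C * wLpNorm S.A p g) :=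
        mul_le_mul_right (hHYC g hg) _
    _ = ENNReal.ofReal (C / S.c₀ * S.omega p f δ) := by
        rw [ENNReal.ofReal_rpow_of_pos (Real.rpow_pos_of_pos (one_div_pos.mpr S.hc₀) _),
          ← Real.rpow_mul (one_div_nonneg.mpr S.hc₀.le),
          mul_one_div_cancel hp'ne, Real.rpow_one,
          ← ENNReal.ofReal_mul (one_div_nonneg.mpr S.hc₀.le), ← hωeq]
        congr 1
        ring
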